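/- arXiv:1907.06890 — 2 statements merged into one kernel-verified Lean document; each statement's English description precedes it below -/
import Mathlib

section
/- Let D be a nonempty finite index set of data points with ground-truth targets y_d ∈ ℝ for d ∈ D, let S be a nonempty finite set of candidate dropout-rate parameters, and for each d ∈ D let μ_d : S → ℝ and s_d : S → ℝ_{>0} be the predicted mean and predicted total variance as functions of the parameter. Define the negative log-likelihood objective L(φ) = Σ_{d∈D} [(1/2) log s_d(φ) + (y_d − μ_d(φ))²/(2 s_d(φ))] and, for σ₁ > 0, the KL objective K_{σ₁}(φ) = Σ_{d∈D} KL(N(y_d, σ₁²) ‖ N(μ_d(φ), s_d(φ))). If φ* ∈ S is the unique minimizer of L over S, then there exists ε > 0 such that for all 0 < σ₁ < ε, φ* is the unique minimizer of K_{σ₁} over S. (Lemma III.1: for a quasi-deterministic ground truth, the dropout rates minimizing the KL divergence between the true and approximated predictive distributions, under normality assumptions, are those minimizing the negative log-likelihood Σ_d (1/2) log σ_tot^d + (y_gt^d − y_pred^d)²/(2σ_tot^d).) -/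
open MeasureTheory ProbabilityTheory
open scoped ENNReal NNReal

section AuxLemmas

open Real

lemma aux_integrable_sq_mul_exp {b : ℝ} (hb : 0 < b) :
    Integrable (fun x : ℝ => x ^ 2 * Real.exp (-b * x ^ 2)) := by
  have h := integrable_rpow_mul_exp_neg_mul_sq hb (s := 2) (by norm_num)
  convert h using 2 with x
  rw [show ((2:ℝ) = ((2:ℕ):ℝ)) by norm_num, Real.rpow_natCast]

lemma aux_integral_mul_exp {b : ℝ} (hb : 0 < b) :
    ∫ x : ℝ, x * Real.exp (-b * x ^ 2) = 0 := by
  have hderiv : ∀ x : ℝ, HasDerivAt (fun x : ℝ => -(2*b)⁻¹ * Real.exp (-b * x ^ 2))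
      (x * Real.exp (-b * x ^ 2)) x := by
    intro x
    have h1 : HasDerivAt (fun x : ℝ => -b * x ^ 2) (-b * (2 * x ^ 1)) x :=
      (hasDerivAt_pow 2 x).const_mul (-b)
    have h2 := (h1.exp).const_mul (-(2*b)⁻¹)
    refine h2.congr_deriv ?_
    field_simp
  have hint : Integrable (fun x : ℝ => x * Real.exp (-b * x ^ 2)) :=
    integrable_mul_exp_neg_mul_sq hb
  have hintf : Integrable (fun x : ℝ => -(2*b)⁻¹ * Real.exp (-b * x ^ 2)) :=
    (integrable_exp_neg_mul_sq hb).const_mul _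
  exact integral_eq_zero_of_hasDerivAt_of_integrable hderiv hint hintf

lemma aux_integral_sq_mul_exp {b : ℝ} (hb : 0 < b) :
    ∫ x : ℝ, x ^ 2 * Real.exp (-b * x ^ 2) = Real.sqrt (π / b) / (2 * b) := by
  have hderiv : ∀ x : ℝ, HasDerivAt (fun x : ℝ => x * Real.exp (-b * x ^ 2))
      (Real.exp (-b * x ^ 2) - 2 * b * (x ^ 2 * Real.exp (-b * x ^ 2))) x := by
    intro x
    have h1 : HasDerivAt (fun x : ℝ => -b * x ^ 2) (-b * (2 * x ^ 1)) x :=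
      (hasDerivAt_pow 2 x).const_mul (-b)
    have h2 := (hasDerivAt_id x).mul h1.exp
    refine h2.congr_deriv ?_
    simp only [id_eq]
    ring
  have hint : Integrable (fun x : ℝ => x * Real.exp (-b * x ^ 2)) :=
    integrable_mul_exp_neg_mul_sq hb
  have hi1 : Integrable (fun x : ℝ => Real.exp (-b * x ^ 2)) := integrable_exp_neg_mul_sq hb
  have hi2 : Integrable (fun x : ℝ => 2 * b * (x ^ 2 * Real.exp (-b * x ^ 2))) :=
    (aux_integrable_sq_mul_exp hb).const_mul _
  have h0 : ∫ x : ℝ, (Real.exp (-b * x ^ 2) - 2 * b * (x ^ 2 * Real.exp (-b * x ^ 2))) = 0 :=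
    integral_eq_zero_of_hasDerivAt_of_integrable hderiv (hi1.sub hi2) hint
  rw [integral_sub hi1 hi2, integral_gaussian, integral_const_mul] at h0
  have hb' : (2:ℝ) * b ≠ 0 := by positivity
  field_simp at h0 ⊢
  linarith

lemma aux_pdf_shift (m c : ℝ) (v : ℝ≥0) (x : ℝ) :
    (x - c) ^ 2 * gaussianPDFReal m v x
      = (fun t => (t + (m - c)) ^ 2 * ((√(2 * π * v))⁻¹ * Real.exp (-(2*(v:ℝ))⁻¹ * t ^ 2))) (x - m) := by
  by_cases hv : (v:ℝ) = 0
  · simp [gaussianPDFReal, hv]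
  simp only [gaussianPDFReal]
  have : -(2*(v:ℝ))⁻¹ * (x - m) ^ 2 = -(x - m)^2 / (2 * v) := by field_simp
  rw [this]
  ring_nf

lemma aux_integrable_sq_sub_mul_pdf (c m : ℝ) (v : ℝ≥0) :
    Integrable (fun x => (x - c) ^ 2 * gaussianPDFReal m v x) := by
  by_cases hv : v = 0
  · simp [hv]
  have hb : 0 < (2*(v:ℝ))⁻¹ := by
    have : (0:ℝ) < v := by exact_mod_cast (zero_le : 0 ≤ v).lt_of_ne (Ne.symm hv)
    positivity
  set b := (2*(v:ℝ))⁻¹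
  have hF : Integrable (fun t : ℝ =>
      (t + (m - c)) ^ 2 * ((√(2 * π * v))⁻¹ * Real.exp (-b * t ^ 2))) := by
    have h1 : Integrable (fun t : ℝ => t ^ 2 * Real.exp (-b * t ^ 2)) :=
      aux_integrable_sq_mul_exp hb
    have h2 : Integrable (fun t : ℝ => t * Real.exp (-b * t ^ 2)) :=
      integrable_mul_exp_neg_mul_sq hb
    have h3 : Integrable (fun t : ℝ => Real.exp (-b * t ^ 2)) := integrable_exp_neg_mul_sq hb
    have : (fun t : ℝ => (t + (m - c)) ^ 2 * ((√(2 * π * v))⁻¹ * Real.exp (-b * t ^ 2)))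
        = fun t : ℝ => (√(2 * π * v))⁻¹ * (t ^ 2 * Real.exp (-b * t ^ 2))
          + (2 * (m - c) * (√(2 * π * v))⁻¹) * (t * Real.exp (-b * t ^ 2))
          + ((m - c) ^ 2 * (√(2 * π * v))⁻¹) * Real.exp (-b * t ^ 2) := by
      funext t; ring
    rw [this]
    exact ((h1.const_mul _).add (h2.const_mul _)).add (h3.const_mul _)
  have := hF.comp_sub_right m
  refine this.congr ?_
  filter_upwards with x
  exact (aux_pdf_shift m c v x).symm

lemma aux_integral_sq_sub_mul_pdf (c m : ℝ) {v : ℝ≥0} (hv : v ≠ 0) :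
    ∫ x, (x - c) ^ 2 * gaussianPDFReal m v x = (v : ℝ) + (m - c) ^ 2 := by
  have hvpos : (0:ℝ) < v := by exact_mod_cast (zero_le : 0 ≤ v).lt_of_ne (Ne.symm hv)
  have hb : 0 < (2*(v:ℝ))⁻¹ := by positivity
  set b := (2*(v:ℝ))⁻¹ with hbdef
  have hshift : ∫ x, (x - c) ^ 2 * gaussianPDFReal m v x
      = ∫ t, (t + (m - c)) ^ 2 * ((√(2 * π * v))⁻¹ * Real.exp (-b * t ^ 2)) := by
    rw [← integral_sub_right_eq_self
      (fun t => (t + (m - c)) ^ 2 * ((√(2 * π * v))⁻¹ * Real.exp (-b * t ^ 2))) m]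
    exact integral_congr_ae (ae_of_all _ fun x => aux_pdf_shift m c v x)
  rw [hshift]
  have h1 : Integrable (fun t : ℝ => t ^ 2 * Real.exp (-b * t ^ 2)) :=
    aux_integrable_sq_mul_exp hb
  have h2 : Integrable (fun t : ℝ => t * Real.exp (-b * t ^ 2)) :=
    integrable_mul_exp_neg_mul_sq hb
  have h3 : Integrable (fun t : ℝ => Real.exp (-b * t ^ 2)) := integrable_exp_neg_mul_sq hb
  have hsplit : (fun t : ℝ => (t + (m - c)) ^ 2 * ((√(2 * π * v))⁻¹ * Real.exp (-b * t ^ 2)))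
      = fun t : ℝ => (√(2 * π * v))⁻¹ * (t ^ 2 * Real.exp (-b * t ^ 2))
        + (2 * (m - c) * (√(2 * π * v))⁻¹) * (t * Real.exp (-b * t ^ 2))
        + ((m - c) ^ 2 * (√(2 * π * v))⁻¹) * Real.exp (-b * t ^ 2) := by
    funext t; ring
  rw [hsplit]
  have i12 : Integrable (fun t : ℝ => (√(2 * π * v))⁻¹ * (t ^ 2 * Real.exp (-b * t ^ 2))
      + (2 * (m - c) * (√(2 * π * v))⁻¹) * (t * Real.exp (-b * t ^ 2))) :=
    (h1.const_mul _).add (h2.const_mul _)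
  rw [integral_add i12 (h3.const_mul _)]
  rw [integral_add (h1.const_mul _) (h2.const_mul _),
    integral_const_mul, integral_const_mul, integral_const_mul,
    aux_integral_sq_mul_exp hb, aux_integral_mul_exp hb, integral_gaussian]
  have hsqrt : √(π / b) = √(2 * π * v) := by
    congr 1
    rw [hbdef]
    field_simp
  have hne : √(2 * π * v) ≠ 0 := by positivity
  rw [hsqrt]
  field_simp
  have h2b : (2:ℝ) * b = ((v:ℝ))⁻¹ := by rw [hbdef]; field_simp
  have h2bv : 2 * b * (v:ℝ) = 1 := by rw [h2b]; field_simp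
  linear_combination (-√(2 * π * v)) * h2bv

end AuxLemmas

/-- The Kullback–Leibler divergence `KL(p ‖ q) = ∫ log(dp/dq) dp` between two
measures on `ℝ`. -/
noncomputable def klDiv (p q : Measure ℝ) : ℝ :=
  ∫ x, Real.log (p.rnDeriv q x).toReal ∂p

section AuxKL

open Real

lemma aux_klDiv_gaussian (m1 m2 : ℝ) {v1 v2 : ℝ≥0} (h1 : v1 ≠ 0) (h2 : v2 ≠ 0) :
    klDiv (gaussianReal m1 v1) (gaussianReal m2 v2)
      = (1/2) * Real.log v2 - (1/2) * Real.log v1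
        + ((v1 : ℝ) + (m1 - m2) ^ 2) / (2 * v2) - 1/2 := by
  have h1p : (0:ℝ) < v1 := by exact_mod_cast (zero_le : 0 ≤ v1).lt_of_ne (Ne.symm h1)
  have h2p : (0:ℝ) < v2 := by exact_mod_cast (zero_le : 0 ≤ v2).lt_of_ne (Ne.symm h2)
  set p := gaussianReal m1 v1 with hp
  set q := gaussianReal m2 v2 with hq
  -- Radon–Nikodym derivative
  have hrn : p.rnDeriv q =ᵐ[volume]
      fun x => (gaussianPDF m2 v2 x)⁻¹ * gaussianPDF m1 v1 x := by
    have hq' : q = volume.withDensity (gaussianPDF m2 v2) := gaussianReal_of_var_ne_zero _ h2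
    rw [hq']
    have hr := Measure.rnDeriv_withDensity_right p volume
      (measurable_gaussianPDF m2 v2).aemeasurable
      (ae_of_all _ fun x => (gaussianPDF_pos m2 h2 x).ne')
      (ae_of_all _ fun x => by
        simp [gaussianPDF, ENNReal.ofReal_ne_top])
    have hr2 := rnDeriv_gaussianReal m1 v1
    filter_upwards [hr, hr2] with x hx hx2
    rw [hx, hx2]
  have hac : p ≪ volume := gaussianReal_absolutelyContinuous m1 h1
  have hae : ∀ᵐ x ∂p, Real.log (p.rnDeriv q x).toReal
      = Real.log (gaussianPDFReal m1 v1 x / gaussianPDFReal m2 v2 x) := by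
    filter_upwards [hac.ae_eq hrn] with x hx
    rw [hx]
    simp only [gaussianPDF]
    rw [ENNReal.toReal_mul, ENNReal.toReal_inv, ENNReal.toReal_ofReal (gaussianPDFReal_nonneg _ _ _),
      ENNReal.toReal_ofReal (gaussianPDFReal_nonneg _ _ _)]
    rw [inv_mul_eq_div]
  have hkl : klDiv p q = ∫ x, Real.log (gaussianPDFReal m1 v1 x / gaussianPDFReal m2 v2 x) ∂p :=
    integral_congr_ae hae
  -- unfold p as withDensity
  have hp' : p = volume.withDensity (fun x => ((gaussianPDFReal m1 v1 x).toNNReal : ℝ≥0∞)) := by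
    rw [hp, gaussianReal_of_var_ne_zero _ h1]
    rfl
  have hint : klDiv p q
      = ∫ x, gaussianPDFReal m1 v1 x * Real.log (gaussianPDFReal m1 v1 x / gaussianPDFReal m2 v2 x) := by
    rw [hkl, hp', integral_withDensity_eq_integral_smul
      ((measurable_gaussianPDFReal m1 v1).real_toNNReal) _]
    congr 1
    funext x
    rw [NNReal.smul_def, smul_eq_mul, Real.coe_toNNReal _ (gaussianPDFReal_nonneg _ _ _)]
  rw [hint]
  -- rewrite the log term
  have hlog : ∀ x : ℝ, Real.log (gaussianPDFReal m1 v1 x / gaussianPDFReal m2 v2 x)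
      = (Real.log (√(2 * π * v2)) - Real.log (√(2 * π * v1)))
        - (x - m1)^2 / (2 * v1) + (x - m2)^2 / (2 * v2) := by
    intro x
    rw [Real.log_div (gaussianPDFReal_pos _ _ _ h1).ne' (gaussianPDFReal_pos _ _ _ h2).ne']
    simp only [gaussianPDFReal]
    rw [Real.log_mul (by positivity) (Real.exp_ne_zero _),
      Real.log_mul (by positivity) (Real.exp_ne_zero _),
      Real.log_exp, Real.log_exp, Real.log_inv, Real.log_inv]
    ring
  have hsplit : (fun x => gaussianPDFReal m1 v1 x
        * Real.log (gaussianPDFReal m1 v1 x / gaussianPDFReal m2 v2 x))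
      = fun x => (Real.log (√(2 * π * v2)) - Real.log (√(2 * π * v1))) * gaussianPDFReal m1 v1 x
        - (2 * (v1:ℝ))⁻¹ * ((x - m1)^2 * gaussianPDFReal m1 v1 x)
        + (2 * (v2:ℝ))⁻¹ * ((x - m2)^2 * gaussianPDFReal m1 v1 x) := by
    funext x
    rw [hlog x]
    field_simp
  rw [hsplit]
  have i0 : Integrable (gaussianPDFReal m1 v1) := integrable_gaussianPDFReal m1 v1
  have i1 := aux_integrable_sq_sub_mul_pdf m1 m1 v1
  have i2 := aux_integrable_sq_sub_mul_pdf m2 m1 v1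
  have i12 : Integrable (fun x =>
      (Real.log (√(2 * π * v2)) - Real.log (√(2 * π * v1))) * gaussianPDFReal m1 v1 x
        - (2 * (v1:ℝ))⁻¹ * ((x - m1)^2 * gaussianPDFReal m1 v1 x)) :=
    (i0.const_mul _).sub (i1.const_mul _)
  rw [integral_add i12 (i2.const_mul _), integral_sub (i0.const_mul _) (i1.const_mul _),
    integral_const_mul, integral_const_mul, integral_const_mul,
    integral_gaussianPDFReal_eq_one m1 h1,
    aux_integral_sq_sub_mul_pdf m1 m1 h1, aux_integral_sq_sub_mul_pdf m2 m1 h1]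
  have e1 : Real.log (√(2 * π * v1)) = (1/2) * (Real.log (2*π) + Real.log v1) := by
    rw [Real.log_sqrt (by positivity), Real.log_mul (by positivity) h1p.ne']
    ring
  have e2 : Real.log (√(2 * π * v2)) = (1/2) * (Real.log (2*π) + Real.log v2) := by
    rw [Real.log_sqrt (by positivity), Real.log_mul (by positivity) h2p.ne']
    ring
  rw [e1, e2]
  have : (2 * (v1:ℝ))⁻¹ * ((v1:ℝ) + (m1 - m1)^2) = 1/2 := by
    field_simp
    try ring
  rw [this]
  have hne2 : (2 * (v2:ℝ)) ≠ 0 := by positivity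
  field_simp
  ring

end AuxKL

/-- **Lemma III.1.** Let `y d` be ground-truth targets, and for each data point
`d` let `μ d φ` and `s d φ` be the predicted mean and predicted total variance
as a function of the dropout-rate parameter `φ`. If `φstar` is the unique
minimizer of the negative log-likelihood
`L φ = Σ_d (1/2) log (s d φ) + (y d − μ d φ)²/(2 s d φ)`, then for every small
enough ground-truth standard deviation `σ₁ > 0`, `φstar` is also the unique
minimizer of the KL objective
`K σ₁ φ = Σ_d KL(N(y d, σ₁²) ‖ N(μ d φ, s d φ))`. -/
theorem nll_minimizer_is_kl_minimizer_for_quasi_deterministic_gt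
    {D S : Type*} [Fintype D] [Nonempty D] [Fintype S] [Nonempty S]
    (y : D → ℝ) (μ : D → S → ℝ) (s : D → S → ℝ) (hs : ∀ d φ, 0 < s d φ)
    (L : S → ℝ)
    (hL : L = fun φ =>
      ∑ d, ((1 / 2) * Real.log (s d φ) + (y d - μ d φ) ^ 2 / (2 * s d φ)))
    (K : ℝ → S → ℝ)
    (hK : K = fun σ₁ φ =>
      ∑ d, klDiv (gaussianReal (y d) (σ₁ ^ 2).toNNReal)
        (gaussianReal (μ d φ) (s d φ).toNNReal))
    (φstar : S) (hmin : ∀ φ, φ ≠ φstar → L φstar < L φ) :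
    ∃ ε > 0, ∀ σ₁ : ℝ, 0 < σ₁ → σ₁ < ε →
      ∀ φ, φ ≠ φstar → K σ₁ φstar < K σ₁ φ := by
  classical
  set T : S → ℝ := fun φ => ∑ d : D, (2 * s d φ)⁻¹ with hT
  -- decomposition of K
  have hKeq : ∀ σ₁ : ℝ, 0 < σ₁ → ∀ φ, K σ₁ φ
      = L φ + σ₁ ^ 2 * T φ
        + (Fintype.card D : ℝ) * (-(1/2) * Real.log (σ₁ ^ 2) - 1/2) := by
    intro σ₁ hσ φ
    have hv1 : (σ₁ ^ 2).toNNReal ≠ 0 := by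
      simp only [ne_eq, Real.toNNReal_eq_zero, not_le]
      positivity
    have hKd : ∀ d : D, klDiv (gaussianReal (y d) (σ₁ ^ 2).toNNReal)
        (gaussianReal (μ d φ) (s d φ).toNNReal)
        = ((1/2) * Real.log (s d φ) + (y d - μ d φ) ^ 2 / (2 * s d φ))
          + σ₁ ^ 2 * (2 * s d φ)⁻¹ + (-(1/2) * Real.log (σ₁ ^ 2) - 1/2) := by
      intro d
      have hv2 : (s d φ).toNNReal ≠ 0 := by
        simp only [ne_eq, Real.toNNReal_eq_zero, not_le]
        exact hs d φ
      rw [aux_klDiv_gaussian _ _ hv1 hv2]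
      rw [Real.coe_toNNReal _ (by positivity : (0:ℝ) ≤ σ₁ ^ 2),
        Real.coe_toNNReal _ (hs d φ).le]
      have h2s : (2 : ℝ) * s d φ ≠ 0 := by have := hs d φ; positivity
      field_simp
      ring
    rw [hK, hL, hT]
    simp only
    rw [Finset.sum_congr rfl (fun d _ => hKd d)]
    rw [Finset.sum_add_distrib, Finset.sum_add_distrib, Finset.sum_const,
      ← Finset.mul_sum]
    simp [nsmul_eq_mul, Finset.card_univ]
  -- choice of ε
  set g : S → ℝ := fun φ =>
    if φ = φstar then 1 else (L φ - L φstar) / (|T φstar - T φ| + 1) with hg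
  have hgpos : ∀ φ, 0 < g φ := by
    intro φ
    rw [hg]
    by_cases hφ : φ = φstar
    · simp [hφ]
    · simp only [hφ, if_false]
      have h1 := hmin φ hφ
      have h2 : (0:ℝ) < |T φstar - T φ| + 1 := by positivity
      exact div_pos (by linarith) h2
  have hne : (Finset.univ : Finset S).Nonempty := Finset.univ_nonempty
  set m := (Finset.univ : Finset S).inf' hne g with hm
  have hmpos : 0 < m := by
    rw [hm, Finset.lt_inf'_iff]
    exact fun φ _ => hgpos φ
  refine ⟨Real.sqrt m, Real.sqrt_pos.mpr hmpos, ?_⟩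
  intro σ₁ hσ hσlt φ hφ
  have hσ2 : σ₁ ^ 2 < m := by
    have : σ₁ ^ 2 < (Real.sqrt m) ^ 2 := by
      apply pow_lt_pow_left₀ hσlt hσ.le
      norm_num
    rwa [Real.sq_sqrt hmpos.le] at this
  have hσ2g : σ₁ ^ 2 < g φ := lt_of_lt_of_le hσ2 (by
    rw [hm]
    exact Finset.inf'_le _ (Finset.mem_univ φ))
  rw [hg] at hσ2g
  simp only [hφ, if_false] at hσ2g
  have hden : (0:ℝ) < |T φstar - T φ| + 1 := by positivity
  have key : σ₁ ^ 2 * (|T φstar - T φ| + 1) < L φ - L φstar :=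
    (lt_div_iff₀ hden).mp hσ2g
  have h5 : σ₁ ^ 2 * (T φstar - T φ) ≤ σ₁ ^ 2 * |T φstar - T φ| :=
    mul_le_mul_of_nonneg_left (le_abs_self _) (sq_nonneg σ₁)
  rw [hKeq σ₁ hσ φstar, hKeq σ₁ hσ φ]
  nlinarith [sq_nonneg σ₁]
end

section
/- Let X be a Gaussian random variable with mean μ ∈ ℝ and variance σ² where σ > 0. Then E[max(X, 0)²] = (μ² + σ²) Φ(μ/σ) + μ σ φ(μ/σ), where φ(x) = (2π)^{-1/2} exp(−x²/2) is the standard normal density and Φ(x) = ∫_{−∞}^x φ(u) du is the standard normal cumulative distribution function. Consequently Var(max(X,0)) = (μ² + σ²) Φ(μ/σ) + μ σ φ(μ/σ) − (μ Φ(μ/σ) + σ φ(μ/σ))². (The analytic variance-propagation formula (9) of assumed density filtering for a ReLU layer.) -/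
open MeasureTheory ProbabilityTheory
open scoped ENNReal NNReal

/-- The standard normal density `φ(x) = (2π)^{-1/2} exp(−x²/2)`. -/
noncomputable def stdGaussianPDF (x : ℝ) : ℝ :=
  (2 * Real.pi) ^ (-(1 / 2) : ℝ) * Real.exp (-x ^ 2 / 2)

/-- The standard normal CDF `Φ(x) = ∫_{−∞}^x φ(u) du`. -/
noncomputable def stdGaussianCDF (x : ℝ) : ℝ :=
  ∫ u in Set.Iic x, stdGaussianPDF u

open Real Set Filter Topology

lemma sg_pdf_eq (x : ℝ) : stdGaussianPDF x = gaussianPDFReal 0 1 x := by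
  simp only [stdGaussianPDF, gaussianPDFReal, NNReal.coe_one, mul_one, sub_zero]
  rw [Real.rpow_neg (by positivity), ← Real.sqrt_eq_rpow]

lemma phi_even (x : ℝ) : stdGaussianPDF (-x) = stdGaussianPDF x := by
  simp [stdGaussianPDF]

lemma hasDerivAt_phi (x : ℝ) : HasDerivAt stdGaussianPDF (-x * stdGaussianPDF x) x := by
  have h1 : HasDerivAt (fun y : ℝ => -y ^ 2 / 2) (-x) x := by
    have := ((hasDerivAt_pow 2 x).neg).div_const 2
    refine this.congr_deriv ?_
    simp [pow_one]; ring
  have h2 := (h1.exp).const_mul ((2 * Real.pi) ^ (-(1 / 2) : ℝ))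
  have : stdGaussianPDF = fun x => (2 * Real.pi) ^ (-(1 / 2) : ℝ) * Real.exp (-x ^ 2 / 2) := rfl
  rw [this]
  refine h2.congr_deriv ?_
  beta_reduce
  ring

lemma integrable_pow_phi (n : ℕ) : Integrable (fun x : ℝ => x ^ n * stdGaussianPDF x) := by
  have h := (integrable_rpow_mul_exp_neg_mul_sq (b := (1:ℝ)/2) (by norm_num)
      (s := (n:ℝ)) (by exact_mod_cast lt_of_lt_of_le neg_one_lt_zero (by exact_mod_cast Nat.cast_nonneg n))).const_mul
      ((2 * Real.pi) ^ (-(1 / 2) : ℝ))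
  refine h.congr (Eventually.of_forall fun x => ?_)
  simp only [stdGaussianPDF, Real.rpow_natCast]
  rw [show -(1/2:ℝ) * x^2 = -x^2/2 by ring]
  ring

lemma tendsto_pow_phi (n : ℕ) :
    Tendsto (fun x : ℝ => x ^ n * stdGaussianPDF x) atTop (𝓝 0) := by
  have h := rpow_mul_exp_neg_mul_sq_isLittleO_exp_neg (b := (1:ℝ)/2) (by norm_num) (n : ℝ)
  have h2 : Tendsto (fun x : ℝ => Real.exp (-(1/2) * x)) atTop (𝓝 0) := by
    apply Real.tendsto_exp_atBot.comp
    exact Tendsto.const_mul_atTop_of_neg (by norm_num) tendsto_id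
  have h3 := h.isBigO.trans_tendsto h2
  have h4 := h3.const_mul ((2 * Real.pi) ^ (-(1 / 2) : ℝ))
  rw [mul_zero] at h4
  refine h4.congr fun x => ?_
  simp only [stdGaussianPDF, Real.rpow_natCast]
  rw [show -(1/2:ℝ) * x^2 = -x^2/2 by ring]
  ring

lemma integral_Ici_phi (a : ℝ) : ∫ y in Ici a, stdGaussianPDF y = stdGaussianCDF (-a) := by
  have h := integral_comp_neg_Iic (-a) stdGaussianPDF
  simp only [neg_neg] at h
  calc ∫ y in Ici a, stdGaussianPDF y = ∫ y in Ioi a, stdGaussianPDF y :=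
        integral_Ici_eq_integral_Ioi
    _ = ∫ u in Iic (-a), stdGaussianPDF (-u) := h.symm
    _ = ∫ u in Iic (-a), stdGaussianPDF u := by simp only [phi_even]
    _ = stdGaussianCDF (-a) := rfl

lemma integral_Ioi_id_phi (a : ℝ) :
    ∫ y in Ioi a, y * stdGaussianPDF y = stdGaussianPDF a := by
  have hint : Integrable (fun x : ℝ => x * stdGaussianPDF x) := by
    simpa using integrable_pow_phi 1
  have htend : Tendsto (fun x : ℝ => -stdGaussianPDF x) atTop (𝓝 0) := by
    have : Tendsto stdGaussianPDF atTop (𝓝 0) := by simpa using tendsto_pow_phi 0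
    simpa using this.neg
  have h := integral_Ioi_of_hasDerivAt_of_tendsto' (a := a)
    (f := fun y => -stdGaussianPDF y) (f' := fun y => y * stdGaussianPDF y)
    (fun x _ => by exact (hasDerivAt_phi x).neg.congr_deriv (by ring))
    hint.integrableOn htend
  simpa using h

lemma integral_Ioi_sq_phi (a : ℝ) :
    ∫ y in Ioi a, y ^ 2 * stdGaussianPDF y
      = stdGaussianCDF (-a) + a * stdGaussianPDF a := by
  have hint2 : Integrable (fun y : ℝ => (y ^ 2 - 1) * stdGaussianPDF y) := by
    have h := (integrable_pow_phi 2).sub (integrable_pow_phi 0)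
    refine h.congr (Eventually.of_forall fun x => ?_)
    simp only [Pi.sub_apply, pow_zero, one_mul]
    ring
  have hint0 : Integrable (fun y : ℝ => stdGaussianPDF y) := by
    simpa using integrable_pow_phi 0
  have key : ∫ y in Ioi a, (y ^ 2 - 1) * stdGaussianPDF y = a * stdGaussianPDF a := by
    have htend : Tendsto (fun x : ℝ => -(x * stdGaussianPDF x)) atTop (𝓝 0) := by
      have : Tendsto (fun x : ℝ => x * stdGaussianPDF x) atTop (𝓝 0) := by
        simpa using tendsto_pow_phi 1
      simpa using this.neg
    have hderiv : ∀ x ∈ Ici a, HasDerivAt (fun y : ℝ => -(y * stdGaussianPDF y))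
        ((x ^ 2 - 1) * stdGaussianPDF x) x := by
      intro x _
      have := ((hasDerivAt_id x).mul (hasDerivAt_phi x)).neg
      refine this.congr_deriv ?_
      simp only [id_eq]
      ring
    have h := integral_Ioi_of_hasDerivAt_of_tendsto' hderiv hint2.integrableOn htend
    simpa using h
  have split : ∫ y in Ioi a, y ^ 2 * stdGaussianPDF y
      = (∫ y in Ioi a, (y ^ 2 - 1) * stdGaussianPDF y)
        + ∫ y in Ioi a, stdGaussianPDF y := by
    rw [← integral_add hint2.integrableOn hint0.integrableOn]
    congr 1 with y
    ring
  rw [split, key, ← integral_Ici_eq_integral_Ioi, integral_Ici_phi]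
  ring

lemma integral_gaussian_eq (μ σ : ℝ) (hσ : 0 < σ) (g : ℝ → ℝ) (hg : Continuous g) :
    ∫ x, g x ∂(gaussianReal μ (σ ^ 2).toNNReal)
      = ∫ y, stdGaussianPDF y * g (σ * y + μ) := by
  have hVcoe : (((σ ^ 2).toNNReal : ℝ≥0) : ℝ) = σ ^ 2 := Real.coe_toNNReal _ (sq_nonneg σ)
  have hmap : Measure.map (fun y => σ * y + μ) (gaussianReal 0 1)
      = gaussianReal μ (σ ^ 2).toNNReal := by
    have h1 : Measure.map (σ * ·) (gaussianReal 0 1) = gaussianReal 0 (σ ^ 2).toNNReal := by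
      rw [gaussianReal_map_const_mul σ, mul_zero]
      congr 1
      refine NNReal.coe_injective ?_
      simp [hVcoe]
    have h2 := gaussianReal_map_add_const (μ := 0) (v := (σ ^ 2).toNNReal) μ
    rw [zero_add] at h2
    rw [← h2, ← h1, Measure.map_map (measurable_add_const μ) (measurable_const_mul σ)]
    rfl
  rw [← hmap, integral_map ((measurable_const_mul σ).add_const μ).aemeasurable
    hg.aestronglyMeasurable]
  rw [gaussianReal_of_var_ne_zero 0 one_ne_zero]
  have hpdf : gaussianPDF 0 1 = fun y => ((Real.toNNReal (gaussianPDFReal 0 1 y) : ℝ≥0) : ℝ≥0∞) :=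
    rfl
  rw [hpdf, integral_withDensity_eq_integral_smul
    ((measurable_gaussianPDFReal 0 1).real_toNNReal) _]
  congr 1 with y
  rw [NNReal.smul_def, smul_eq_mul, Real.coe_toNNReal _ (gaussianPDFReal_nonneg 0 1 y),
    ← sg_pdf_eq]


/-- **ReLU variance propagation (ADF formula (9)).** For `X ~ N(μ, σ²)` with
`σ > 0`, `E[max(X, 0)²] = (μ² + σ²) Φ(μ/σ) + μ σ φ(μ/σ)`, and consequently
`Var(max(X, 0)) = (μ² + σ²) Φ(μ/σ) + μ σ φ(μ/σ) − (μ Φ(μ/σ) + σ φ(μ/σ))²`. -/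
theorem relu_second_moment_and_variance_gaussian (μ σ : ℝ) (hσ : 0 < σ) :
    (∫ x, (max x 0) ^ 2 ∂(gaussianReal μ (σ ^ 2).toNNReal) =
      (μ ^ 2 + σ ^ 2) * stdGaussianCDF (μ / σ) + μ * σ * stdGaussianPDF (μ / σ)) ∧
    ((∫ x, (max x 0) ^ 2 ∂(gaussianReal μ (σ ^ 2).toNNReal)) -
        (∫ x, max x 0 ∂(gaussianReal μ (σ ^ 2).toNNReal)) ^ 2 =
      (μ ^ 2 + σ ^ 2) * stdGaussianCDF (μ / σ) + μ * σ * stdGaussianPDF (μ / σ) -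
        (μ * stdGaussianCDF (μ / σ) + σ * stdGaussianPDF (μ / σ)) ^ 2) := by
  set a : ℝ := -(μ / σ) with ha
  have hb : -a = μ / σ := by simp [ha]
  have hphia : stdGaussianPDF a = stdGaussianPDF (μ / σ) := by
    rw [ha, phi_even]
  have hmem : ∀ y ∈ Ici a, 0 ≤ σ * y + μ := by
    intro y hy
    have h := mul_le_mul_of_nonneg_left hy.out hσ.le
    rw [ha, mul_neg, mul_div_cancel₀ _ hσ.ne'] at h
    linarith
  have hint1 : Integrable (fun x : ℝ => x * stdGaussianPDF x) := by
    simpa using integrable_pow_phi 1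
  have hint0 : Integrable stdGaussianPDF := by
    simpa using integrable_pow_phi 0
  have hE : ∀ k : ℕ, 0 < k → ∫ x, (max x 0) ^ k ∂(gaussianReal μ (σ ^ 2).toNNReal)
      = ∫ y in Ici a, stdGaussianPDF y * (σ * y + μ) ^ k := by
    intro k hk
    rw [integral_gaussian_eq μ σ hσ (fun x => (max x 0) ^ k)
      ((continuous_id.max continuous_const).pow k)]
    rw [← setIntegral_eq_integral_of_forall_compl_eq_zero
      (f := fun y => stdGaussianPDF y * (max (σ * y + μ) 0) ^ k) (s := Ici a) ?_]
    · exact setIntegral_congr_fun measurableSet_Ici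
        (fun y hy => by rw [max_eq_left (hmem y hy)])
    · intro y hy
      have hlt : σ * y + μ < 0 := by
        simp only [mem_Ici, not_le] at hy
        have h := mul_lt_mul_of_pos_left hy hσ
        rw [ha, mul_neg, mul_div_cancel₀ _ hσ.ne'] at h
        linarith
      simp only [max_eq_right hlt.le, zero_pow hk.ne', mul_zero]
  have h1 : ∫ y in Ici a, stdGaussianPDF y * (σ * y + μ)
      = μ * stdGaussianCDF (μ / σ) + σ * stdGaussianPDF (μ / σ) := by
    rw [integral_Ici_eq_integral_Ioi]
    have e : ∀ y : ℝ, stdGaussianPDF y * (σ * y + μ)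
        = σ * (y * stdGaussianPDF y) + μ * stdGaussianPDF y := fun y => by ring
    simp_rw [e]
    rw [integral_add ((hint1.const_mul σ).integrableOn) ((hint0.const_mul μ).integrableOn),
      integral_const_mul, integral_const_mul, integral_Ioi_id_phi,
      ← integral_Ici_eq_integral_Ioi, integral_Ici_phi, hb, hphia]
    ring
  have h2 : ∫ y in Ici a, stdGaussianPDF y * (σ * y + μ) ^ 2
      = (μ ^ 2 + σ ^ 2) * stdGaussianCDF (μ / σ) + μ * σ * stdGaussianPDF (μ / σ) := by
    rw [integral_Ici_eq_integral_Ioi]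
    have hint2 : Integrable (fun x : ℝ => x ^ 2 * stdGaussianPDF x) := integrable_pow_phi 2
    have e : ∀ y : ℝ, stdGaussianPDF y * (σ * y + μ) ^ 2
        = σ ^ 2 * (y ^ 2 * stdGaussianPDF y)
          + ((2 * σ * μ) * (y * stdGaussianPDF y) + μ ^ 2 * stdGaussianPDF y) := fun y => by ring
    simp_rw [e]
    have hB : Integrable (fun y : ℝ => 2 * σ * μ * (y * stdGaussianPDF y)
        + μ ^ 2 * stdGaussianPDF y) := (hint1.const_mul _).add (hint0.const_mul _)
    rw [integral_add ((hint2.const_mul _).integrableOn) hB.integrableOn,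
      integral_add ((hint1.const_mul _).integrableOn) ((hint0.const_mul _).integrableOn),
      integral_const_mul, integral_const_mul, integral_const_mul,
      integral_Ioi_id_phi, integral_Ioi_sq_phi,
      ← integral_Ici_eq_integral_Ioi, integral_Ici_phi, hb, hphia, ha]
    field_simp
    ring
  have hm2 := hE 2 (by norm_num)
  have hm1 : (∫ x, max x 0 ∂(gaussianReal μ (σ ^ 2).toNNReal))
      = μ * stdGaussianCDF (μ / σ) + σ * stdGaussianPDF (μ / σ) := by
    have := hE 1 one_pos
    simp only [pow_one] at this
    rw [this, h1]
  refine ⟨by rw [hm2, h2], ?_⟩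
  rw [hm2, h2, hm1]
end
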